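/- Let n ≤ p and let {A,B} be an (m,p,n)-GMP with GSVD as in the context, with generalized singular values (αᵢ, βᵢ). Then for every 1 ≤ i ≤ n, βᵢ equals the difference of maxima: βᵢ = max_{Ξ₁ ∈ 𝕌_p, Ξ₂ ∈ 𝕌_n} |tr(Ξ₁ B (AᴴA + BᴴB)^{-1/2} Ξ₂ ℋ_i)| − max_{Ξ₁ ∈ 𝕌_p, Ξ₂ ∈ 𝕌_n} |tr(Ξ₁ B (AᴴA + BᴴB)^{-1/2} Ξ₂ ℋ_{i+1})|. -/

import Mathlib

open Matrix BigOperators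
open scoped ComplexOrder

namespace Stmt5Aux

variable {p n : ℕ}

def e (hnp : n ≤ p) (l : Fin n) : Fin p := ⟨p - n + l, by omega⟩

lemma e_inj (hnp : n ≤ p) : Function.Injective (e hnp) := by
  intro a b h
  have := congrArg Fin.val h
  simp only [e] at this
  exact Fin.ext (by omega)

lemma abs_sq_eq (z : ℂ) : (‖z‖ : ℂ)^2 = star z * z := by
  rw [Complex.star_def, ← Complex.normSq_eq_conj_mul_self, ← Complex.sq_norm]
  push_cast; ring

lemma unitary_col_sq {k : ℕ} (Q : Matrix (Fin k) (Fin k) ℂ) (hQ : star Q * Q = 1)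
    (b : Fin k) : ∑ a, (‖Q a b‖)^2 = 1 := by
  have h := congrFun (congrFun hQ b) b
  rw [Matrix.mul_apply] at h
  simp only [Matrix.one_apply_eq] at h
  have hc : ∑ a, ((‖Q a b‖)^2 : ℂ) = 1 := by
    rw [← h]
    exact Finset.sum_congr rfl (fun a _ => by rw [Matrix.star_apply]; exact abs_sq_eq _)
  have h2 : ((∑ a, (‖Q a b‖)^2 : ℝ) : ℂ) = 1 := by push_cast; exact hc
  exact_mod_cast h2

lemma unitary_row_sq {k : ℕ} (Q : Matrix (Fin k) (Fin k) ℂ) (hQ : Q * star Q = 1)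
    (a : Fin k) : ∑ b, (‖Q a b‖)^2 = 1 := by
  have h := congrFun (congrFun hQ a) a
  rw [Matrix.mul_apply] at h
  simp only [Matrix.one_apply_eq] at h
  have hc : ∑ b, ((‖Q a b‖)^2 : ℂ) = 1 := by
    rw [← h]
    refine Finset.sum_congr rfl (fun b _ => ?_)
    rw [Matrix.star_apply, mul_comm]
    exact abs_sq_eq _
  have h2 : ((∑ b, (‖Q a b‖)^2 : ℝ) : ℂ) = 1 := by push_cast; exact hc
  exact_mod_cast h2

/-- partial column-sum bound through the injective embedding -/
lemma sum_col_e_le (hnp : n ≤ p) (Q : Matrix (Fin p) (Fin p) ℂ) (hQ : star Q * Q = 1)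
    (F : Finset (Fin n)) (b : Fin p) :
    ∑ d ∈ F, (‖Q (e hnp d) b‖)^2 ≤ 1 := by
  calc ∑ d ∈ F, (‖Q (e hnp d) b‖)^2
      = ∑ a ∈ F.image (e hnp), (‖Q a b‖)^2 :=
        (Finset.sum_image (f := fun a => (‖Q a b‖)^2)
          (fun x _ y _ h => e_inj hnp h)).symm
    _ ≤ ∑ a, (‖Q a b‖)^2 :=
        Finset.sum_le_univ_sum_of_nonneg (fun a => sq_nonneg _)
    _ = 1 := unitary_col_sq Q hQ b

lemma sum_row_e_le (hnp : n ≤ p) (Q : Matrix (Fin p) (Fin p) ℂ) (hQ : Q * star Q = 1)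
    (F : Finset (Fin n)) (a : Fin p) :
    ∑ d ∈ F, (‖Q a (e hnp d)‖)^2 ≤ 1 := by
  calc ∑ d ∈ F, (‖Q a (e hnp d)‖)^2
      = ∑ b ∈ F.image (e hnp), (‖Q a b‖)^2 :=
        (Finset.sum_image (f := fun b => (‖Q a b‖)^2)
          (fun x _ y _ h => e_inj hnp h)).symm
    _ ≤ ∑ b, (‖Q a b‖)^2 :=
        Finset.sum_le_univ_sum_of_nonneg (fun b => sq_nonneg _)
    _ = 1 := unitary_row_sq Q hQ a

lemma Mb_apply (hnp : n ≤ p) (β : Fin n → ℝ) (k : Fin p) (l : Fin n) :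
    (Matrix.of fun (k : Fin p) (l : Fin n) =>
        if (k : ℕ) + n = p + (l : ℕ) then Complex.ofReal (β l) else 0) k l
    = if k = e hnp l then Complex.ofReal (β l) else 0 := by
  have : ((k : ℕ) + n = p + (l : ℕ)) ↔ (k = e hnp l) := by
    rw [Fin.ext_iff]; simp only [e]; omega
  simp only [Matrix.of_apply, this]

lemma H_apply (hnp : n ≤ p) (cut : ℕ) (d : Fin n) (a : Fin p) :
    (Matrix.of (fun (k : Fin n) (l : Fin p) =>
      if (l : ℕ) + n = p + (k : ℕ) ∧ cut ≤ (k : ℕ) then (1 : ℂ) else 0)) d a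
    = if cut ≤ (d : ℕ) then (if a = e hnp d then (1:ℂ) else 0) else 0 := by
  have : ((a : ℕ) + n = p + (d : ℕ)) ↔ (a = e hnp d) := by
    rw [Fin.ext_iff]; simp only [e]; omega
  simp only [Matrix.of_apply, this]
  by_cases h1 : a = e hnp d <;> by_cases h2 : cut ≤ (d : ℕ) <;> simp [h1, h2]

lemma trace_formula (hnp : n ≤ p) (β : Fin n → ℝ) (cut : ℕ)
    (Q : Matrix (Fin p) (Fin p) ℂ) (W : Matrix (Fin n) (Fin n) ℂ) :
    Matrix.trace (Q * (Matrix.of fun (k : Fin p) (l : Fin n) =>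
        if (k : ℕ) + n = p + (l : ℕ) then Complex.ofReal (β l) else 0) * W *
      (Matrix.of (fun (k : Fin n) (l : Fin p) =>
        if (l : ℕ) + n = p + (k : ℕ) ∧ cut ≤ (k : ℕ) then (1 : ℂ) else 0)))
    = ∑ d : Fin n, ∑ c : Fin n,
        (if cut ≤ (d : ℕ) then Complex.ofReal (β c) * Q (e hnp d) (e hnp c) * W c d else 0) := by
  rw [Matrix.trace_mul_comm]
  rw [Matrix.trace]
  refine Finset.sum_congr rfl (fun d _ => ?_)
  rw [Matrix.diag_apply, Matrix.mul_apply]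
  have step1 : ∀ a : Fin p,
      (Matrix.of (fun (k : Fin n) (l : Fin p) =>
        if (l : ℕ) + n = p + (k : ℕ) ∧ cut ≤ (k : ℕ) then (1 : ℂ) else 0)) d a *
      (Q * (Matrix.of fun (k : Fin p) (l : Fin n) =>
        if (k : ℕ) + n = p + (l : ℕ) then Complex.ofReal (β l) else 0) * W) a d
      = if cut ≤ (d:ℕ) then (if a = e hnp d then (1:ℂ) else 0) *
          (Q * (Matrix.of fun (k : Fin p) (l : Fin n) =>
        if (k : ℕ) + n = p + (l : ℕ) then Complex.ofReal (β l) else 0) * W) a d else 0 := by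
    intro a
    rw [H_apply hnp]
    by_cases h2 : cut ≤ (d : ℕ) <;> simp [h2]
  simp only [step1]
  by_cases h2 : cut ≤ (d : ℕ)
  · simp only [h2, if_true, ite_mul, one_mul, zero_mul, Finset.sum_ite_eq' Finset.univ (e hnp d),
      Finset.mem_univ, if_true]
    rw [Matrix.mul_apply]
    refine Finset.sum_congr rfl (fun c _ => ?_)
    rw [Matrix.mul_apply]
    rw [Finset.sum_congr rfl (fun b _ => by rw [Mb_apply hnp])]
    simp only [mul_ite, mul_zero, ite_mul, zero_mul]
    rw [Finset.sum_ite_eq' Finset.univ (e hnp c)]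
    simp [mul_comm]
  · simp [h2]

lemma Mb_conj (hnp : n ≤ p) (β : Fin n → ℝ) :
    (Matrix.of fun (k : Fin p) (l : Fin n) =>
        if (k : ℕ) + n = p + (l : ℕ) then Complex.ofReal (β l) else 0)ᴴ *
    (Matrix.of fun (k : Fin p) (l : Fin n) =>
        if (k : ℕ) + n = p + (l : ℕ) then Complex.ofReal (β l) else 0)
    = Matrix.diagonal (fun l => (Complex.ofReal (β l))^2) := by
  funext l l'
  rw [Matrix.mul_apply]
  simp only [Matrix.conjTranspose_apply]
  rw [Finset.sum_congr rfl (fun k _ => by rw [Mb_apply hnp, Mb_apply hnp])]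
  simp only [ite_mul, zero_mul, mul_ite, mul_zero]
  rw [Finset.sum_ite_eq' Finset.univ (e hnp l')]
  simp only [Finset.mem_univ, if_true]
  by_cases h : l' = l
  · subst h; simp [Matrix.diagonal_apply_eq, Complex.conj_ofReal, sq]
  · have h2 : e hnp l' ≠ e hnp l := fun hc => h (e_inj hnp hc)
    rw [if_neg h2, Matrix.diagonal_apply_ne _ (fun hc => h hc.symm)]
    simp

/-- rearrangement-type bound: if 0 ≤ t ≤ 1 pointwise, ∑ t ≤ #{c ≥ cut}, β monotone in [0,1],
then ∑ β c * t c ≤ ∑_{c ≥ cut} β c. -/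
lemma rearr {n : ℕ} (β : Fin n → ℝ) (hβ0 : ∀ k, 0 ≤ β k) (hβ1 : ∀ k, β k ≤ 1)
    (hmono : Monotone β) (cut : ℕ) (t : Fin n → ℝ)
    (ht0 : ∀ c, 0 ≤ t c) (ht1 : ∀ c, t c ≤ 1)
    (hsum : ∑ c, t c ≤ (Finset.univ.filter (fun d : Fin n => cut ≤ (d : ℕ))).card) :
    ∑ c, β c * t c ≤ ∑ c ∈ Finset.univ.filter (fun d : Fin n => cut ≤ (d : ℕ)), β c := by
  by_cases hcut : cut < n
  · set F := Finset.univ.filter (fun d : Fin n => cut ≤ (d : ℕ)) with hF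
    set b := β ⟨cut, hcut⟩ with hb
    have hbF : ∀ c ∈ F, b ≤ β c := by
      intro c hc
      rw [hF, Finset.mem_filter] at hc
      exact hmono (by simpa [Fin.le_def] using hc.2)
    have hbnF : ∀ c ∈ Fᶜ, β c ≤ b := by
      intro c hc
      rw [hF, Finset.mem_compl, Finset.mem_filter] at hc
      refine hmono ?_
      simp only [Finset.mem_univ, true_and, not_le] at hc
      exact le_of_lt (by simpa [Fin.lt_def] using hc)
    have split : ∑ c, β c * t c = ∑ c ∈ F, β c * t c + ∑ c ∈ Fᶜ, β c * t c := by
      rw [Finset.sum_add_sum_compl]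
    rw [split]
    have h1 : ∑ c ∈ Fᶜ, β c * t c ≤ b * ∑ c ∈ Fᶜ, t c := by
      rw [Finset.mul_sum]
      exact Finset.sum_le_sum (fun c hc => mul_le_mul_of_nonneg_right (hbnF c hc) (ht0 c))
    have h2 : ∑ c ∈ F, β c * t c ≤ ∑ c ∈ F, (β c - b * (1 - t c)) := by
      refine Finset.sum_le_sum (fun c hc => ?_)
      have := mul_le_mul_of_nonneg_right (hbF c hc) (sub_nonneg.mpr (ht1 c))
      nlinarith [this]
    have h3 : ∑ c ∈ F, (β c - b * (1 - t c)) = ∑ c ∈ F, β c - (F.card : ℝ) * b + b * ∑ c ∈ F, t c := by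
      simp only [mul_sub, mul_one]
      rw [Finset.sum_sub_distrib, Finset.sum_sub_distrib, Finset.sum_const, nsmul_eq_mul,
        ← Finset.mul_sum]
      ring
    have h4 : b * ∑ c ∈ F, t c + b * ∑ c ∈ Fᶜ, t c ≤ (F.card : ℝ) * b := by
      rw [← mul_add, Finset.sum_add_sum_compl]
      calc b * ∑ c, t c ≤ b * (F.card : ℝ) := by
            exact mul_le_mul_of_nonneg_left hsum (hβ0 _)
        _ = (F.card : ℝ) * b := mul_comm _ _
    calc ∑ c ∈ F, β c * t c + ∑ c ∈ Fᶜ, β c * t c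
        ≤ (∑ c ∈ F, β c - (F.card:ℝ) * b + b * ∑ c ∈ F, t c) + b * ∑ c ∈ Fᶜ, t c := by
          rw [← h3]; exact add_le_add h2 h1
      _ ≤ ∑ c ∈ F, β c := by nlinarith [h4]
  · -- cut ≥ n : the filter is empty, all t c must vanish
    have hFempty : (Finset.univ.filter (fun d : Fin n => cut ≤ (d : ℕ))) = ∅ := by
      refine Finset.filter_false_of_mem (fun d _ => ?_)
      have := d.isLt; omega
    rw [hFempty] at hsum ⊢
    simp only [Finset.card_empty, Nat.cast_zero, Finset.sum_empty] at hsum ⊢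
    have hzero : ∀ c : Fin n, t c = 0 := by
      intro c
      by_contra hc
      have hpos : 0 < t c := lt_of_le_of_ne (ht0 c) (Ne.symm hc)
      have : 0 < ∑ c : Fin n, t c :=
        Finset.sum_pos' (fun c _ => ht0 c) ⟨c, Finset.mem_univ c, hpos⟩
      linarith
    simp [hzero]

lemma trace_id (hnp : n ≤ p) (β : Fin n → ℝ) (cut : ℕ) :
    (∑ d : Fin n, ∑ c : Fin n,
      (if cut ≤ (d : ℕ) then Complex.ofReal (β c) *
        (1 : Matrix (Fin p) (Fin p) ℂ) (e hnp d) (e hnp c) *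
        (1 : Matrix (Fin n) (Fin n) ℂ) c d else 0))
    = Complex.ofReal (∑ d ∈ Finset.univ.filter (fun d : Fin n => cut ≤ (d:ℕ)), β d) := by
  have inner : ∀ d : Fin n, (∑ c : Fin n,
      (if cut ≤ (d : ℕ) then Complex.ofReal (β c) *
        (1 : Matrix (Fin p) (Fin p) ℂ) (e hnp d) (e hnp c) *
        (1 : Matrix (Fin n) (Fin n) ℂ) c d else 0))
      = if cut ≤ (d : ℕ) then Complex.ofReal (β d) else 0 := by
    intro d
    by_cases h : cut ≤ (d : ℕ)
    · simp only [h, if_true]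
      rw [Finset.sum_eq_single d]
      · simp [Matrix.one_apply]
      · intro c _ hc
        simp [Matrix.one_apply, hc]
      · simp
    · simp [h]
  rw [Finset.sum_congr rfl (fun d _ => inner d), Finset.sum_ite, Finset.sum_const_zero, add_zero,
    Complex.ofReal_sum]


lemma bound {p n : ℕ} (hnp : n ≤ p) (β : Fin n → ℝ) (hβ0 : ∀ k, 0 ≤ β k)
    (cut : ℕ) (Q : Matrix (Fin p) (Fin p) ℂ) (hQ1 : star Q * Q = 1) (hQ2 : Q * star Q = 1)
    (W : Matrix (Fin n) (Fin n) ℂ) (hW1 : star W * W = 1) (hW2 : W * star W = 1) :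
    ‖∑ d : Fin n, ∑ c : Fin n,
        (if cut ≤ (d : ℕ) then Complex.ofReal (β c) * Q (e hnp d) (e hnp c) * W c d else 0)‖
    ≤ ∑ c, β c * (∑ d ∈ Finset.univ.filter (fun d : Fin n => cut ≤ (d:ℕ)),
        ‖Q (e hnp d) (e hnp c)‖ * ‖W c d‖) := by
  set F := Finset.univ.filter (fun d : Fin n => cut ≤ (d:ℕ)) with hF
  rw [Finset.sum_comm]
  calc ‖∑ c : Fin n, ∑ d : Fin n,
        (if cut ≤ (d : ℕ) then Complex.ofReal (β c) * Q (e hnp d) (e hnp c) * W c d else 0)‖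
      ≤ ∑ c : Fin n, ‖∑ d : Fin n,
        (if cut ≤ (d : ℕ) then Complex.ofReal (β c) * Q (e hnp d) (e hnp c) * W c d else 0)‖ :=
        norm_sum_le _ _
    _ ≤ ∑ c, β c * (∑ d ∈ F, ‖Q (e hnp d) (e hnp c)‖ * ‖W c d‖) := by
        refine Finset.sum_le_sum (fun c _ => ?_)
        rw [← Finset.sum_filter]
        calc ‖∑ d ∈ F, Complex.ofReal (β c) * Q (e hnp d) (e hnp c) * W c d‖
            ≤ ∑ d ∈ F, ‖Complex.ofReal (β c) * Q (e hnp d) (e hnp c) * W c d‖ :=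
              norm_sum_le _ _
          _ = ∑ d ∈ F, β c * (‖Q (e hnp d) (e hnp c)‖ * ‖W c d‖) := by
              refine Finset.sum_congr rfl (fun d _ => ?_)
              rw [norm_mul, norm_mul, Complex.norm_real, Real.norm_eq_abs, abs_of_nonneg (hβ0 c), mul_assoc]
          _ = β c * (∑ d ∈ F, ‖Q (e hnp d) (e hnp c)‖ * ‖W c d‖) := by
              rw [Finset.mul_sum]

lemma t_le_one {p n : ℕ} (hnp : n ≤ p)
    (Q : Matrix (Fin p) (Fin p) ℂ) (hQ1 : star Q * Q = 1)
    (W : Matrix (Fin n) (Fin n) ℂ) (hW2 : W * star W = 1) (cut : ℕ) (c : Fin n) :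
    ∑ d ∈ Finset.univ.filter (fun d : Fin n => cut ≤ (d:ℕ)),
        ‖Q (e hnp d) (e hnp c)‖ * ‖W c d‖ ≤ 1 := by
  set F := Finset.univ.filter (fun d : Fin n => cut ≤ (d:ℕ)) with hF
  have h1 : ∑ d ∈ F, ‖Q (e hnp d) (e hnp c)‖ * ‖W c d‖
      ≤ (∑ d ∈ F, (‖Q (e hnp d) (e hnp c)‖)^2
        + ∑ d ∈ F, (‖W c d‖)^2) / 2 := by
    rw [← Finset.sum_add_distrib, Finset.sum_div]
    refine Finset.sum_le_sum (fun d _ => ?_)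
    nlinarith [sq_nonneg (‖Q (e hnp d) (e hnp c)‖ - ‖W c d‖)]
  have h2 : ∑ d ∈ F, (‖Q (e hnp d) (e hnp c)‖)^2 ≤ 1 :=
    sum_col_e_le hnp Q hQ1 F (e hnp c)
  have h3 : ∑ d ∈ F, (‖W c d‖)^2 ≤ 1 := by
    calc ∑ d ∈ F, (‖W c d‖)^2 ≤ ∑ d, (‖W c d‖)^2 :=
          Finset.sum_le_univ_sum_of_nonneg (fun d => sq_nonneg _)
      _ = 1 := unitary_row_sq W hW2 c
  linarith

lemma t_sum_le {p n : ℕ} (hnp : n ≤ p)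
    (Q : Matrix (Fin p) (Fin p) ℂ) (hQ2 : Q * star Q = 1)
    (W : Matrix (Fin n) (Fin n) ℂ) (hW1 : star W * W = 1) (cut : ℕ) :
    ∑ c, ∑ d ∈ Finset.univ.filter (fun d : Fin n => cut ≤ (d:ℕ)),
        ‖Q (e hnp d) (e hnp c)‖ * ‖W c d‖
      ≤ ((Finset.univ.filter (fun d : Fin n => cut ≤ (d:ℕ))).card : ℝ) := by
  set F := Finset.univ.filter (fun d : Fin n => cut ≤ (d:ℕ)) with hF
  rw [Finset.sum_comm]
  calc ∑ d ∈ F, ∑ c, ‖Q (e hnp d) (e hnp c)‖ * ‖W c d‖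
      ≤ ∑ d ∈ F, (1:ℝ) := by
        refine Finset.sum_le_sum (fun d _ => ?_)
        have h1 : ∑ c, ‖Q (e hnp d) (e hnp c)‖ * ‖W c d‖
            ≤ (∑ c, (‖Q (e hnp d) (e hnp c)‖)^2
              + ∑ c, (‖W c d‖)^2) / 2 := by
          rw [← Finset.sum_add_distrib, Finset.sum_div]
          refine Finset.sum_le_sum (fun c _ => ?_)
          nlinarith [sq_nonneg (‖Q (e hnp d) (e hnp c)‖ - ‖W c d‖)]
        have h2 : ∑ c : Fin n, (‖Q (e hnp d) (e hnp c)‖)^2 ≤ 1 :=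
          sum_row_e_le hnp Q hQ2 Finset.univ (e hnp d)
        have h3 : ∑ c, (‖W c d‖)^2 = 1 := unitary_col_sq W hW1 d
        linarith
    _ = (F.card : ℝ) := by rw [Finset.sum_const, nsmul_eq_mul, mul_one]

lemma RR_eq (hnp : n ≤ p)
    (A : Matrix (Fin m) (Fin n) ℂ) (B : Matrix (Fin p) (Fin n) ℂ)
    (V : Matrix (Fin p) (Fin p) ℂ) (hV : V ∈ Matrix.unitaryGroup (Fin p) ℂ)
    (R : Matrix (Fin n) (Fin n) ℂ) (β : Fin n → ℝ)
    (hB : B = V * (Matrix.of fun (k : Fin p) (l : Fin n) =>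
        if (k : ℕ) + n = p + (l : ℕ) then Complex.ofReal (β l) else 0) * R)
    (hAA : Aᴴ * A = Rᴴ * Matrix.diagonal (fun l => Complex.ofReal (1 - β l ^ 2)) * R) :
    Aᴴ * A + Bᴴ * B = Rᴴ * R := by
  set Mb : Matrix (Fin p) (Fin n) ℂ := (Matrix.of fun (k : Fin p) (l : Fin n) =>
        if (k : ℕ) + n = p + (l : ℕ) then Complex.ofReal (β l) else 0) with hMb
  have hVV : Vᴴ * V = 1 := (Matrix.mem_unitaryGroup_iff'.mp hV)
  have hBB : Bᴴ * B = Rᴴ * Matrix.diagonal (fun l => (Complex.ofReal (β l))^2) * R := by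
    rw [hB]
    rw [Matrix.conjTranspose_mul, Matrix.conjTranspose_mul]
    have : Rᴴ * (Mbᴴ * Vᴴ) * (V * Mb * R) = Rᴴ * ((Mbᴴ * ((Vᴴ * V) * Mb)) * R) := by
      simp only [Matrix.mul_assoc]
    rw [this, hVV, Matrix.one_mul, ← Matrix.mul_assoc, ← Matrix.mul_assoc, ← Mb_conj hnp β, ← hMb,
      Matrix.mul_assoc Rᴴ Mbᴴ Mb]
  rw [hAA, hBB]
  have : Rᴴ * Matrix.diagonal (fun l => Complex.ofReal (1 - β l ^ 2)) * R
      + Rᴴ * Matrix.diagonal (fun l => (Complex.ofReal (β l))^2) * R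
      = Rᴴ * (Matrix.diagonal (fun l => Complex.ofReal (1 - β l ^ 2))
          + Matrix.diagonal (fun l => (Complex.ofReal (β l))^2)) * R := by
    rw [Matrix.mul_add, Matrix.add_mul]
  rw [this, Matrix.diagonal_add]
  have hdiag : (fun l => Complex.ofReal (1 - β l ^ 2) + (Complex.ofReal (β l))^2)
      = fun _ => (1 : ℂ) := by
    funext l; push_cast; ring
  rw [hdiag, Matrix.diagonal_one, mul_one]

lemma U_unitary {n : ℕ} (R S : Matrix (Fin n) (Fin n) ℂ) (hS : S.PosDef)
    (hRR : Rᴴ * R = S * S) : R * S⁻¹ ∈ Matrix.unitaryGroup (Fin n) ℂ := by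
  have hdet : IsUnit S.det := isUnit_iff_ne_zero.mpr (ne_of_gt hS.det_pos)
  have hSinv : S⁻¹ᴴ = S⁻¹ := by rw [Matrix.conjTranspose_nonsing_inv, hS.1.eq]
  rw [Matrix.mem_unitaryGroup_iff']
  have : star (R * S⁻¹) = S⁻¹ * Rᴴ := by
    rw [Matrix.star_eq_conjTranspose, Matrix.conjTranspose_mul, hSinv]
  rw [this]
  calc S⁻¹ * Rᴴ * (R * S⁻¹) = S⁻¹ * (Rᴴ * R) * S⁻¹ := by noncomm_ring
    _ = S⁻¹ * (S * S) * S⁻¹ := by rw [hRR]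
    _ = (S⁻¹ * S) * (S * S⁻¹) := by noncomm_ring
    _ = 1 := by rw [Matrix.nonsing_inv_mul S hdet, Matrix.mul_nonsing_inv S hdet, one_mul]



lemma sup_eq {p n : ℕ} (hnp : n ≤ p) (β : Fin n → ℝ)
    (hβ0 : ∀ k, 0 ≤ β k) (hβ1 : ∀ k, β k ≤ 1) (hmono : Monotone β)
    (V : Matrix (Fin p) (Fin p) ℂ) (hV : V ∈ Matrix.unitaryGroup (Fin p) ℂ)
    (U : Matrix (Fin n) (Fin n) ℂ) (hU : U ∈ Matrix.unitaryGroup (Fin n) ℂ) (cut : ℕ) :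
    (⨆ X1 : Matrix.unitaryGroup (Fin p) ℂ, ⨆ X2 : Matrix.unitaryGroup (Fin n) ℂ,
      ‖Matrix.trace ((X1 : Matrix (Fin p) (Fin p) ℂ) *
        (V * (Matrix.of fun (k : Fin p) (l : Fin n) =>
          if (k : ℕ) + n = p + (l : ℕ) then Complex.ofReal (β l) else 0) * U) *
        (X2 : Matrix (Fin n) (Fin n) ℂ) *
        Matrix.of (fun (k : Fin n) (l : Fin p) =>
          if (l : ℕ) + n = p + (k : ℕ) ∧ cut ≤ (k : ℕ) then (1 : ℂ) else 0))‖)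
    = ∑ c ∈ Finset.univ.filter (fun d : Fin n => cut ≤ (d : ℕ)), β c := by
  haveI : Nonempty (Matrix.unitaryGroup (Fin p) ℂ) := ⟨1⟩
  haveI : Nonempty (Matrix.unitaryGroup (Fin n) ℂ) := ⟨1⟩
  set Mb : Matrix (Fin p) (Fin n) ℂ := (Matrix.of fun (k : Fin p) (l : Fin n) =>
      if (k : ℕ) + n = p + (l : ℕ) then Complex.ofReal (β l) else 0) with hMb
  set H : Matrix (Fin n) (Fin p) ℂ := Matrix.of (fun (k : Fin n) (l : Fin p) =>
      if (l : ℕ) + n = p + (k : ℕ) ∧ cut ≤ (k : ℕ) then (1 : ℂ) else 0) with hH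
  set F := Finset.univ.filter (fun d : Fin n => cut ≤ (d : ℕ)) with hF
  set g : Matrix.unitaryGroup (Fin p) ℂ → Matrix.unitaryGroup (Fin n) ℂ → ℝ :=
    fun X1 X2 => ‖Matrix.trace ((X1 : Matrix (Fin p) (Fin p) ℂ) *
      (V * Mb * U) * (X2 : Matrix (Fin n) (Fin n) ℂ) * H)‖ with hg
  -- upper bound for every pair
  have hub : ∀ (X1 : Matrix.unitaryGroup (Fin p) ℂ) (X2 : Matrix.unitaryGroup (Fin n) ℂ),
      g X1 X2 ≤ ∑ c ∈ F, β c := by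
    intro X1 X2
    have hQmem : (X1 : Matrix (Fin p) (Fin p) ℂ) * V ∈ Matrix.unitaryGroup (Fin p) ℂ :=
      mul_mem X1.prop hV
    have hWmem : U * (X2 : Matrix (Fin n) (Fin n) ℂ) ∈ Matrix.unitaryGroup (Fin n) ℂ :=
      mul_mem hU X2.prop
    set Q : Matrix (Fin p) (Fin p) ℂ := (X1 : Matrix (Fin p) (Fin p) ℂ) * V with hQ
    set W : Matrix (Fin n) (Fin n) ℂ := U * (X2 : Matrix (Fin n) (Fin n) ℂ) with hW
    have hassoc : (X1 : Matrix (Fin p) (Fin p) ℂ) * (V * Mb * U) *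
        (X2 : Matrix (Fin n) (Fin n) ℂ) * H = Q * Mb * W * H := by
      rw [hQ, hW]; simp only [Matrix.mul_assoc]
    have hQ1 : star Q * Q = 1 := (Unitary.mem_iff.mp hQmem).1
    have hQ2 : Q * star Q = 1 := (Unitary.mem_iff.mp hQmem).2
    have hW1 : star W * W = 1 := (Unitary.mem_iff.mp hWmem).1
    have hW2 : W * star W = 1 := (Unitary.mem_iff.mp hWmem).2
    rw [hg]
    simp only
    rw [hassoc, hMb, hH, trace_formula hnp β cut Q W]
    calc ‖∑ d : Fin n, ∑ c : Fin n,
          (if cut ≤ (d : ℕ) then Complex.ofReal (β c) * Q (e hnp d) (e hnp c) * W c d else 0)‖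
        ≤ ∑ c, β c * (∑ d ∈ Finset.univ.filter (fun d : Fin n => cut ≤ (d:ℕ)),
            ‖Q (e hnp d) (e hnp c)‖ * ‖W c d‖) :=
          bound hnp β hβ0 cut Q hQ1 hQ2 W hW1 hW2
      _ ≤ ∑ c ∈ F, β c := by
          rw [hF]
          refine rearr β hβ0 hβ1 hmono cut _ ?_ ?_ ?_
          · intro c
            exact Finset.sum_nonneg (fun d _ =>
              mul_nonneg (norm_nonneg _) (norm_nonneg _))
          · intro c
            exact t_le_one hnp Q hQ1 W hW2 cut c
          · exact t_sum_le hnp Q hQ2 W hW1 cut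
  -- the bound is attained
  have hatt : g ⟨star V, Unitary.star_mem hV⟩ ⟨star U, Unitary.star_mem hU⟩ = ∑ c ∈ F, β c := by
    rw [hg]
    simp only
    have hassoc : (star V) * (V * Mb * U) * (star U) * H
        = ((star V * V) * Mb * (U * star U)) * H := by
      simp only [Matrix.mul_assoc]
    rw [hassoc, (Unitary.mem_iff.mp hV).1, (Unitary.mem_iff.mp hU).2]
    rw [show (1 : Matrix (Fin p) (Fin p) ℂ) * Mb * (1 : Matrix (Fin n) (Fin n) ℂ) * H
        = (1 : Matrix (Fin p) (Fin p) ℂ) * Mb * (1 : Matrix (Fin n) (Fin n) ℂ) * H from rfl]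
    rw [hMb, hH, trace_formula hnp β cut 1 1, trace_id hnp β cut, Complex.norm_real, Real.norm_eq_abs,
      abs_of_nonneg (Finset.sum_nonneg (fun d _ => hβ0 d)), hF]
  refine le_antisymm ?_ ?_
  · exact ciSup_le (fun X1 => ciSup_le (fun X2 => hub X1 X2))
  · have hbdd2 : BddAbove (Set.range (fun X2 => g ⟨star V, Unitary.star_mem hV⟩ X2)) := by
      refine ⟨∑ c ∈ F, β c, ?_⟩
      rintro y ⟨X2, rfl⟩
      exact hub _ X2
    have hbdd1 : BddAbove (Set.range (fun X1 => ⨆ X2, g X1 X2)) := by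
      refine ⟨∑ c ∈ F, β c, ?_⟩
      rintro y ⟨X1, rfl⟩
      exact ciSup_le (fun X2 => hub X1 X2)
    calc ∑ c ∈ F, β c = g ⟨star V, Unitary.star_mem hV⟩ ⟨star U, Unitary.star_mem hU⟩ :=
          hatt.symm
      _ ≤ ⨆ X2, g ⟨star V, Unitary.star_mem hV⟩ X2 := le_ciSup hbdd2 _
      _ ≤ ⨆ X1, ⨆ X2, g X1 X2 := le_ciSup hbdd1 _

end Stmt5Aux

theorem stmt5
    {m p n : ℕ} (hnp : n ≤ p)
    (A : Matrix (Fin m) (Fin n) ℂ) (B : Matrix (Fin p) (Fin n) ℂ)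
    (hrank : (Matrix.fromRows A B).rank = n)
    (V : Matrix (Fin p) (Fin p) ℂ) (hV : V ∈ Matrix.unitaryGroup (Fin p) ℂ)
    (R : Matrix (Fin n) (Fin n) ℂ) (hR : IsUnit R.det)
    (β : Fin n → ℝ)
    (hβ0 : ∀ k, 0 ≤ β k) (hβ1 : ∀ k, β k ≤ 1) (hmono : Monotone β)
    (hB : B = V * (Matrix.of fun (k : Fin p) (l : Fin n) =>
        if (k : ℕ) + n = p + (l : ℕ) then Complex.ofReal (β l) else 0) * R)
    (hAA : Aᴴ * A = Rᴴ * Matrix.diagonal (fun l => Complex.ofReal (1 - β l ^ 2)) * R)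
    (S : Matrix (Fin n) (Fin n) ℂ) (hS : S.PosDef)
    (hSsq : S * S = Aᴴ * A + Bᴴ * B)
    (i : Fin n) :
    β i =
(⨆ X1 : Matrix.unitaryGroup (Fin p) ℂ, ⨆ X2 : Matrix.unitaryGroup (Fin n) ℂ,
      ‖Matrix.trace ((X1 : Matrix (Fin p) (Fin p) ℂ) * B * S⁻¹ *
        (X2 : Matrix (Fin n) (Fin n) ℂ) *
        Matrix.of (fun (k : Fin n) (l : Fin p) =>
          if (l : ℕ) + n = p + (k : ℕ) ∧ (i : ℕ) ≤ (k : ℕ) then (1 : ℂ) else 0))‖) -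
(⨆ X1 : Matrix.unitaryGroup (Fin p) ℂ, ⨆ X2 : Matrix.unitaryGroup (Fin n) ℂ,
      ‖Matrix.trace ((X1 : Matrix (Fin p) (Fin p) ℂ) * B * S⁻¹ *
        (X2 : Matrix (Fin n) (Fin n) ℂ) *
        Matrix.of (fun (k : Fin n) (l : Fin p) =>
          if (l : ℕ) + n = p + (k : ℕ) ∧ (i : ℕ) + 1 ≤ (k : ℕ) then (1 : ℂ) else 0))‖) := by
  have hRR : Aᴴ * A + Bᴴ * B = Rᴴ * R := Stmt5Aux.RR_eq hnp A B V hV R β hB hAA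
  have hRRS : Rᴴ * R = S * S := by rw [← hRR, hSsq]
  have hU : R * S⁻¹ ∈ Matrix.unitaryGroup (Fin n) ℂ := Stmt5Aux.U_unitary R S hS hRRS
  have key : ∀ cut : ℕ,
      (⨆ X1 : Matrix.unitaryGroup (Fin p) ℂ, ⨆ X2 : Matrix.unitaryGroup (Fin n) ℂ,
        ‖Matrix.trace ((X1 : Matrix (Fin p) (Fin p) ℂ) * B * S⁻¹ *
          (X2 : Matrix (Fin n) (Fin n) ℂ) *
          Matrix.of (fun (k : Fin n) (l : Fin p) =>
            if (l : ℕ) + n = p + (k : ℕ) ∧ cut ≤ (k : ℕ) then (1 : ℂ) else 0))‖)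
      = ∑ c ∈ Finset.univ.filter (fun d : Fin n => cut ≤ (d : ℕ)), β c := by
    intro cut
    have hre : ∀ (X1 : Matrix.unitaryGroup (Fin p) ℂ) (X2 : Matrix.unitaryGroup (Fin n) ℂ),
        (X1 : Matrix (Fin p) (Fin p) ℂ) * B * S⁻¹ * (X2 : Matrix (Fin n) (Fin n) ℂ) *
          Matrix.of (fun (k : Fin n) (l : Fin p) =>
            if (l : ℕ) + n = p + (k : ℕ) ∧ cut ≤ (k : ℕ) then (1 : ℂ) else 0)
        = (X1 : Matrix (Fin p) (Fin p) ℂ) *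
          (V * (Matrix.of fun (k : Fin p) (l : Fin n) =>
            if (k : ℕ) + n = p + (l : ℕ) then Complex.ofReal (β l) else 0) * (R * S⁻¹)) *
          (X2 : Matrix (Fin n) (Fin n) ℂ) *
          Matrix.of (fun (k : Fin n) (l : Fin p) =>
            if (l : ℕ) + n = p + (k : ℕ) ∧ cut ≤ (k : ℕ) then (1 : ℂ) else 0) := by
      intro X1 X2
      rw [hB]
      simp only [Matrix.mul_assoc]
    calc _ = (⨆ X1 : Matrix.unitaryGroup (Fin p) ℂ, ⨆ X2 : Matrix.unitaryGroup (Fin n) ℂ,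
          ‖Matrix.trace ((X1 : Matrix (Fin p) (Fin p) ℂ) *
            (V * (Matrix.of fun (k : Fin p) (l : Fin n) =>
              if (k : ℕ) + n = p + (l : ℕ) then Complex.ofReal (β l) else 0) * (R * S⁻¹)) *
            (X2 : Matrix (Fin n) (Fin n) ℂ) *
            Matrix.of (fun (k : Fin n) (l : Fin p) =>
              if (l : ℕ) + n = p + (k : ℕ) ∧ cut ≤ (k : ℕ) then (1 : ℂ) else 0))‖) :=
          iSup_congr (fun X1 => iSup_congr (fun X2 => by rw [hre X1 X2]))
      _ = ∑ c ∈ Finset.univ.filter (fun d : Fin n => cut ≤ (d : ℕ)), β c :=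
          Stmt5Aux.sup_eq hnp β hβ0 hβ1 hmono V hV (R * S⁻¹) hU cut
  rw [key (i : ℕ), key ((i : ℕ) + 1)]
  have hFsucc : Finset.univ.filter (fun d : Fin n => (i : ℕ) + 1 ≤ (d : ℕ))
      = (Finset.univ.filter (fun d : Fin n => (i : ℕ) ≤ (d : ℕ))).erase i := by
    ext d
    simp only [Finset.mem_erase, Finset.mem_filter, Finset.mem_univ, true_and, ne_eq,
      Fin.ext_iff]
    omega
  have hi : i ∈ Finset.univ.filter (fun d : Fin n => (i : ℕ) ≤ (d : ℕ)) := by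
    simp
  have hsum := Finset.add_sum_erase _ β hi
  rw [hFsucc]
  linarith
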